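/- In the setting of the previous statement, for simplices Δ, Σ of X̂ one has link_{X̂}(Δ) ⊆ link_{X̂}(Σ) if and only if link_X(↓Δ) ⊆ link_X(↓Σ). -/

import Mathlib

/-- The blowup of a simplicial graph `Ḡ` with respect to a family of bases `L v`. -/
def blowup {V : Type*} (Gbar : SimpleGraph V) (L : V → Type*) :
    SimpleGraph ((v : V) × Option (L v)) where
  Adj x y := (x.1 = y.1 ∧ x ≠ y ∧ (x.2 = none ∨ y.2 = none)) ∨ Gbar.Adj x.1 y.1
  symm := by
    constructor
    rintro x y (⟨h1, h2, h3⟩ | h)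
    · exact Or.inl ⟨h1.symm, h2.symm, h3.symm⟩
    · exact Or.inr h.symm
  loopless := by
    constructor
    rintro x (⟨-, h, -⟩ | h)
    · exact h rfl
    · exact Gbar.irrefl h

/-- The link of a set of vertices: all vertices adjacent to every member of the set. -/
def SimpleGraph.link {α : Type*} (G : SimpleGraph α) (s : Set α) : Set α :=
  {x | ∀ y ∈ s, G.Adj x y}

/-- The map `↓` from `X̂` (bases `L v × ℕ`) to `X` (bases `L v`). -/
def downMap {V : Type*} (L : V → Type*) (x : (v : V) × Option (L v × ℕ)) :
    (v : V) × Option (L v) :=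
  ⟨x.1, x.2.map Prod.fst⟩

lemma down_adj {V : Type*} (Gbar : SimpleGraph V) (L : V → Type*)
    (x y : (v : V) × Option (L v × ℕ)) :
    (blowup Gbar (fun v => L v × ℕ)).Adj x y ↔
      (blowup Gbar L).Adj (downMap L x) (downMap L y) := by
  obtain ⟨v, o⟩ := x
  obtain ⟨w, p⟩ := y
  by_cases hvw : v = w
  · subst hvw
    rcases o with _ | a <;> rcases p with _ | b <;>
      simp [blowup, downMap, Sigma.mk.inj_iff]
  · simp [blowup, downMap, hvw]

lemma down_mem_link_iff {V : Type*} (Gbar : SimpleGraph V) (L : V → Type*)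
    (Δ : Set ((v : V) × Option (L v × ℕ))) (x : (v : V) × Option (L v × ℕ)) :
    x ∈ (blowup Gbar (fun v => L v × ℕ)).link Δ ↔
      downMap L x ∈ (blowup Gbar L).link (downMap L '' Δ) := by
  simp only [SimpleGraph.link, Set.mem_setOf_eq, Set.forall_mem_image]
  exact forall₂_congr fun y _ => down_adj Gbar L x y

/-- For simplices `Δ, Σ` of `X̂`: `link_{X̂}(Δ) ⊆ link_{X̂}(Σ)` iff
`link_X(↓Δ) ⊆ link_X(↓Σ)`. -/
theorem blowup_down_link_subset {V : Type*} (Gbar : SimpleGraph V) (L : V → Type*)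
    (Δ Sig : Set ((v : V) × Option (L v × ℕ)))
    (hΔ : (blowup Gbar (fun v => L v × ℕ)).IsClique Δ)
    (hSig : (blowup Gbar (fun v => L v × ℕ)).IsClique Sig) :
    (blowup Gbar (fun v => L v × ℕ)).link Δ ⊆
        (blowup Gbar (fun v => L v × ℕ)).link Sig ↔
      (blowup Gbar L).link (downMap L '' Δ) ⊆ (blowup Gbar L).link (downMap L '' Sig) := by
  constructor
  · intro h p hp
    set x : (v : V) × Option (L v × ℕ) := ⟨p.1, p.2.map (fun a => (a, 0))⟩ with hx
    have hdx : downMap L x = p := by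
      obtain ⟨v, o⟩ := p
      simp only [downMap, hx, Option.map_map]
      cases o <;> rfl
    have : x ∈ (blowup Gbar (fun v => L v × ℕ)).link Δ := by
      rw [down_mem_link_iff, hdx]; exact hp
    have := h this
    rw [down_mem_link_iff, hdx] at this
    exact this
  · intro h x hx
    rw [down_mem_link_iff] at hx ⊢
    exact h hx
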